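/- Let q > 1, λ = q − q⁻¹, z₀ ≠ 0 real. On the ℂ-vector space with basis {|M,ν,m⟩ : M,ν,m ∈ ℤ, ν ≤ M, m ≥ ν − M}, define X³|M,ν,m⟩ = q^{2ν}z₀|M,ν,m⟩, X⁺|M,ν,m⟩ = −(q²z₀/√(1+q²))√(q^{4M}−q^{4ν})|M,ν+1,m+1⟩, X⁻|M,ν,m⟩ = (qz₀/√(1+q²))√(q^{4M}−q^{4(ν−1)})|M,ν−1,m−1⟩ (zero when the square-root argument vanishes or indices leave the range). Then these operators satisfy X³X⁺ = q²X⁺X³, X³X⁻ = q⁻²X⁻X³, X⁻X⁺ − X⁺X⁻ = λX³X³, and R² := X³X³ − qX⁺X⁻ − q⁻¹X⁻X⁺ acts as q^{4M+2}z₀² on |M,ν,m⟩. -/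

import Mathlib

noncomputable section

/-- Index set {(M,ν,m) : M,ν,m ∈ ℤ, ν ≤ M, m ≥ ν − M}. -/
abbrev XIdx : Type := {v : ℤ × ℤ × ℤ // v.2.1 ≤ v.1 ∧ v.2.1 - v.1 ≤ v.2.2}

/-- The ℂ-vector space with basis {|M,ν,m⟩}. -/
abbrev XSpace : Type := XIdx →₀ ℂ

/-- X³|M,ν,m⟩ = q^{2ν} z₀ |M,ν,m⟩. -/
def X3Op (q z0 : ℝ) : Module.End ℂ XSpace :=
  Finsupp.lsum ℂ fun v =>
    ((q ^ (2 * v.1.2.1) * z0 : ℝ) : ℂ) • Finsupp.lsingle v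

/-- X⁺|M,ν,m⟩ = −(q²z₀/√(1+q²))√(q^{4M}−q^{4ν}) |M,ν+1,m+1⟩ (zero for ν = M). -/
def XPlusOp (q z0 : ℝ) : Module.End ℂ XSpace :=
  Finsupp.lsum ℂ fun v =>
    if h : v.1.2.1 < v.1.1 then
      ((-(q ^ 2 * z0 / Real.sqrt (1 + q ^ 2)) *
          Real.sqrt (q ^ (4 * v.1.1) - q ^ (4 * v.1.2.1)) : ℝ) : ℂ) •
        Finsupp.lsingle ⟨(v.1.1, v.1.2.1 + 1, v.1.2.2 + 1), by
          have h1 := v.2.1; have h2 := v.2.2; dsimp only; omega⟩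
    else 0

/-- X⁻|M,ν,m⟩ = (qz₀/√(1+q²))√(q^{4M}−q^{4(ν−1)}) |M,ν−1,m−1⟩. -/
def XMinusOp (q z0 : ℝ) : Module.End ℂ XSpace :=
  Finsupp.lsum ℂ fun v =>
    (((q * z0 / Real.sqrt (1 + q ^ 2)) *
        Real.sqrt (q ^ (4 * v.1.1) - q ^ (4 * (v.1.2.1 - 1))) : ℝ) : ℂ) •
      Finsupp.lsingle ⟨(v.1.1, v.1.2.1 - 1, v.1.2.2 - 1), by
        have h1 := v.2.1; have h2 := v.2.2; dsimp only; omega⟩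

def upIdx (v : XIdx) (h : v.1.2.1 < v.1.1) : XIdx :=
  ⟨(v.1.1, v.1.2.1 + 1, v.1.2.2 + 1), by have h1 := v.2.1; have h2 := v.2.2; dsimp only; omega⟩
def downIdx (v : XIdx) : XIdx :=
  ⟨(v.1.1, v.1.2.1 - 1, v.1.2.2 - 1), by have h1 := v.2.1; have h2 := v.2.2; dsimp only; omega⟩

lemma X3_single (q z0 : ℝ) (v : XIdx) :
    X3Op q z0 (Finsupp.single v 1) = ((q ^ (2 * v.1.2.1) * z0 : ℝ) : ℂ) • Finsupp.single v 1 := by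
  simp [X3Op]

lemma XPlus_single (q z0 : ℝ) (v : XIdx) (h : v.1.2.1 < v.1.1) :
    XPlusOp q z0 (Finsupp.single v 1) =
      ((-(q ^ 2 * z0 / Real.sqrt (1 + q ^ 2)) *
          Real.sqrt (q ^ (4 * v.1.1) - q ^ (4 * v.1.2.1)) : ℝ) : ℂ) •
        Finsupp.single (upIdx v h) 1 := by
  simp [XPlusOp, upIdx, h]

lemma XPlus_single_top (q z0 : ℝ) (v : XIdx) (h : ¬ v.1.2.1 < v.1.1) :
    XPlusOp q z0 (Finsupp.single v 1) = 0 := by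
  simp [XPlusOp, h]

lemma XMinus_single (q z0 : ℝ) (v : XIdx) :
    XMinusOp q z0 (Finsupp.single v 1) =
      (((q * z0 / Real.sqrt (1 + q ^ 2)) *
          Real.sqrt (q ^ (4 * v.1.1) - q ^ (4 * (v.1.2.1 - 1))) : ℝ) : ℂ) •
        Finsupp.single (downIdx v) 1 := by
  simp [XMinusOp, downIdx]

lemma up_down (v : XIdx) (h : v.1.2.1 < v.1.1) : downIdx (upIdx v h) = v := by
  apply Subtype.ext
  simp [upIdx, downIdx]

lemma down_up (v : XIdx) (h : (downIdx v).1.2.1 < (downIdx v).1.1) :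
    upIdx (downIdx v) h = v := by
  apply Subtype.ext
  simp [upIdx, downIdx]

lemma zp (a : ℂ) (ha : a ≠ 0) (n : ℤ) (k : ℕ) : a ^ (n + (k:ℤ)) = a ^ n * a ^ k := by
  rw [zpow_add₀ ha, zpow_natCast]

theorem rel1 (q z0 : ℝ) (hq : 1 < q) :
    X3Op q z0 * XPlusOp q z0 = ((q : ℂ) ^ 2) • (XPlusOp q z0 * X3Op q z0) := by
  have hq0 : (0:ℝ) < q := lt_trans one_pos hq
  have hqc : (q:ℂ) ≠ 0 := by exact_mod_cast hq0.ne'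
  apply Finsupp.lhom_ext'; intro v; apply LinearMap.ext_ring
  simp only [LinearMap.comp_apply, Finsupp.lsingle_apply, Module.End.mul_apply,
    LinearMap.smul_apply]
  by_cases h : v.1.2.1 < v.1.1
  · rw [XPlus_single _ _ _ h, map_smul, X3_single, X3_single, map_smul,
      XPlus_single _ _ _ h, smul_smul, smul_smul, smul_smul]
    congr 1
    have huv : (upIdx v h).1.2.1 = v.1.2.1 + 1 := rfl
    rw [huv]
    push_cast
    rw [show (2 : ℤ) * (v.1.2.1 + 1) = 2 * v.1.2.1 + (2:ℕ) by push_cast; ring, zp _ hqc]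
    ring
  · rw [XPlus_single_top _ _ _ h, X3_single, map_smul, XPlus_single_top _ _ _ h]
    simp

theorem rel2 (q z0 : ℝ) (hq : 1 < q) :
    X3Op q z0 * XMinusOp q z0 = ((q : ℂ) ^ 2)⁻¹ • (XMinusOp q z0 * X3Op q z0) := by
  have hq0 : (0:ℝ) < q := lt_trans one_pos hq
  have hqc : (q:ℂ) ≠ 0 := by exact_mod_cast hq0.ne'
  apply Finsupp.lhom_ext'; intro v; apply LinearMap.ext_ring
  simp only [LinearMap.comp_apply, Finsupp.lsingle_apply, Module.End.mul_apply,
    LinearMap.smul_apply]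
  rw [XMinus_single, map_smul, X3_single, X3_single, map_smul, XMinus_single,
    smul_smul, smul_smul, smul_smul]
  congr 1
  have hdv : (downIdx v).1.2.1 = v.1.2.1 - 1 := rfl
  rw [hdv]
  push_cast
  rw [mul_assoc (((q:ℂ)^2)⁻¹), eq_inv_mul_iff_mul_eq₀ (pow_ne_zero 2 hqc),
    show (2 : ℤ) * v.1.2.1 = 2 * (v.1.2.1 - 1) + (2:ℕ) by push_cast; ring, zp _ hqc]
  ring

theorem rel3 (q z0 : ℝ) (hq : 1 < q) :
    XMinusOp q z0 * XPlusOp q z0 - XPlusOp q z0 * XMinusOp q z0 =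
      ((q : ℂ) - (q : ℂ)⁻¹) • (X3Op q z0 * X3Op q z0) := by
  have hq0 : (0:ℝ) < q := lt_trans one_pos hq
  have hqc : (q:ℂ) ≠ 0 := by exact_mod_cast hq0.ne'
  have hs0 : Real.sqrt (1 + q ^ 2) ≠ 0 := by positivity
  have hsc : ((Real.sqrt (1 + q ^ 2) : ℝ) : ℂ) ≠ 0 := by exact_mod_cast hs0
  have hS : ((Real.sqrt (1 + q ^ 2) : ℝ) : ℂ) ^ 2 = 1 + (q:ℂ)^2 := by
    rw [← Complex.ofReal_pow, Real.sq_sqrt (by positivity)]; push_cast; ring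
  apply Finsupp.lhom_ext'; intro v; apply LinearMap.ext_ring
  simp only [LinearMap.comp_apply, Finsupp.lsingle_apply, LinearMap.sub_apply,
    Module.End.mul_apply, LinearMap.smul_apply]
  have h1 := v.2.1
  have hd : (downIdx v).1.2.1 < (downIdx v).1.1 := by
    simp only [downIdx]; omega
  have hduM : (downIdx v).1.1 = v.1.1 := rfl
  have hdun : (downIdx v).1.2.1 = v.1.2.1 - 1 := rfl
  have hB : ((Real.sqrt (q ^ (4 * v.1.1) - q ^ (4 * (v.1.2.1 - 1))) : ℝ) : ℂ) ^ 2
      = (q:ℂ) ^ (4 * v.1.1) - (q:ℂ) ^ (4 * (v.1.2.1 - 1)) := by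
    rw [← Complex.ofReal_pow, Real.sq_sqrt (sub_nonneg.2 (zpow_le_zpow_right₀ hq.le (by omega)))]
    push_cast; ring
  by_cases h : v.1.2.1 < v.1.1
  · have huM : (upIdx v h).1.1 = v.1.1 := rfl
    have hun : (upIdx v h).1.2.1 = v.1.2.1 + 1 := rfl
    have hA : ((Real.sqrt (q ^ (4 * v.1.1) - q ^ (4 * v.1.2.1)) : ℝ) : ℂ) ^ 2
        = (q:ℂ) ^ (4 * v.1.1) - (q:ℂ) ^ (4 * v.1.2.1) := by
      rw [← Complex.ofReal_pow, Real.sq_sqrt (sub_nonneg.2 (zpow_le_zpow_right₀ hq.le (by omega)))]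
      push_cast; ring
    rw [XPlus_single _ _ _ h, map_smul, XMinus_single, up_down, XMinus_single, map_smul,
      XPlus_single _ _ _ hd, down_up, X3_single, map_smul, X3_single]
    simp only [smul_smul]
    rw [← sub_smul]
    congr 1
    rw [huM, hun, hduM, hdun, show v.1.2.1 + 1 - 1 = v.1.2.1 by ring]
    push_cast
    field_simp
    ring_nf
    ring_nf at hA hB
    have hQ : (q:ℂ) ^ (v.1.2.1 * 4) = (q:ℂ) ^ (-4 + v.1.2.1 * 4) * (q:ℂ) ^ (4:ℕ) := by
      rw [← zp _ hqc]; congr 1; push_cast; ring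
    have hT : ((q:ℂ) ^ (v.1.2.1 * 2)) ^ 2 = (q:ℂ) ^ (-4 + v.1.2.1 * 4) * (q:ℂ) ^ (4:ℕ) := by
      rw [← zp _ hqc, ← zpow_natCast ((q:ℂ) ^ (v.1.2.1 * 2)) 2, ← zpow_mul]
      congr 1; push_cast; ring
    have hS4 : ((Real.sqrt (1 + q ^ 2) : ℝ) : ℂ) ^ 4 = (1 + (q:ℂ)^2)^2 := by
      rw [show ((Real.sqrt (1 + q ^ 2) : ℝ) : ℂ) ^ 4 = (((Real.sqrt (1 + q ^ 2) : ℝ) : ℂ)^2)^2 by ring, hS]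
    rw [hA, hB, hS, hQ, hT]
    ring
  · have hMeq : v.1.2.1 = v.1.1 := by omega
    rw [XPlus_single_top _ _ _ h, map_zero, XMinus_single, map_smul,
      XPlus_single _ _ _ hd, down_up, X3_single, map_smul, X3_single]
    simp only [smul_smul]
    rw [zero_sub, ← neg_smul]
    congr 1
    rw [hduM, hdun, hMeq]
    push_cast
    field_simp
    ring_nf
    have hB' : ((Real.sqrt (q ^ (4 * v.1.1) - q ^ (4 * (v.1.1 - 1))) : ℝ) : ℂ) ^ 2
        = (q:ℂ) ^ (4 * v.1.1) - (q:ℂ) ^ (4 * (v.1.1 - 1)) := by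
      rw [← Complex.ofReal_pow, Real.sq_sqrt (sub_nonneg.2 (zpow_le_zpow_right₀ hq.le (by omega)))]
      push_cast; ring
    ring_nf at hB'
    have hQ : (q:ℂ) ^ (v.1.1 * 4) = (q:ℂ) ^ (-4 + v.1.1 * 4) * (q:ℂ) ^ (4:ℕ) := by
      rw [← zp _ hqc]; congr 1; push_cast; ring
    have hT : ((q:ℂ) ^ (v.1.1 * 2)) ^ 2 = (q:ℂ) ^ (-4 + v.1.1 * 4) * (q:ℂ) ^ (4:ℕ) := by
      rw [← zp _ hqc, ← zpow_natCast ((q:ℂ) ^ (v.1.1 * 2)) 2, ← zpow_mul]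
      congr 1; push_cast; ring
    rw [hB', hS, hQ, hT]
    ring

theorem rel4 (q z0 : ℝ) (hq : 1 < q) (v : XIdx) :
    (X3Op q z0 * X3Op q z0 - (q : ℂ) • (XPlusOp q z0 * XMinusOp q z0) -
        (q : ℂ)⁻¹ • (XMinusOp q z0 * XPlusOp q z0)) (Finsupp.single v 1) =
      ((q ^ (4 * v.1.1 + 2) * z0 ^ 2 : ℝ) : ℂ) • Finsupp.single v 1 := by
  have hq0 : (0:ℝ) < q := lt_trans one_pos hq
  have hqc : (q:ℂ) ≠ 0 := by exact_mod_cast hq0.ne'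
  have hs0 : Real.sqrt (1 + q ^ 2) ≠ 0 := by positivity
  have hsc : ((Real.sqrt (1 + q ^ 2) : ℝ) : ℂ) ≠ 0 := by exact_mod_cast hs0
  have hS : ((Real.sqrt (1 + q ^ 2) : ℝ) : ℂ) ^ 2 = 1 + (q:ℂ)^2 := by
    rw [← Complex.ofReal_pow, Real.sq_sqrt (by positivity)]; push_cast; ring
  simp only [LinearMap.sub_apply, Module.End.mul_apply, LinearMap.smul_apply]
  have h1 := v.2.1
  have hd : (downIdx v).1.2.1 < (downIdx v).1.1 := by
    simp only [downIdx]; omega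
  have hduM : (downIdx v).1.1 = v.1.1 := rfl
  have hdun : (downIdx v).1.2.1 = v.1.2.1 - 1 := rfl
  have hB : ((Real.sqrt (q ^ (4 * v.1.1) - q ^ (4 * (v.1.2.1 - 1))) : ℝ) : ℂ) ^ 2
      = (q:ℂ) ^ (4 * v.1.1) - (q:ℂ) ^ (4 * (v.1.2.1 - 1)) := by
    rw [← Complex.ofReal_pow, Real.sq_sqrt (sub_nonneg.2 (zpow_le_zpow_right₀ hq.le (by omega)))]
    push_cast; ring
  have hQ : (q:ℂ) ^ (v.1.2.1 * 4) = (q:ℂ) ^ (-4 + v.1.2.1 * 4) * (q:ℂ) ^ (4:ℕ) := by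
    rw [← zp _ hqc]; congr 1; push_cast; ring
  have hT : ((q:ℂ) ^ (v.1.2.1 * 2)) ^ 2 = (q:ℂ) ^ (-4 + v.1.2.1 * 4) * (q:ℂ) ^ (4:ℕ) := by
    rw [← zp _ hqc, ← zpow_natCast ((q:ℂ) ^ (v.1.2.1 * 2)) 2, ← zpow_mul]
    congr 1; push_cast; ring
  have hR : (q:ℂ) ^ (2 + v.1.1 * 4) = (q:ℂ) ^ (v.1.1 * 4) * (q:ℂ) ^ (2:ℕ) := by
    rw [← zp _ hqc]; congr 1; push_cast; ring
  by_cases h : v.1.2.1 < v.1.1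
  · have huM : (upIdx v h).1.1 = v.1.1 := rfl
    have hun : (upIdx v h).1.2.1 = v.1.2.1 + 1 := rfl
    have hA : ((Real.sqrt (q ^ (4 * v.1.1) - q ^ (4 * v.1.2.1)) : ℝ) : ℂ) ^ 2
        = (q:ℂ) ^ (4 * v.1.1) - (q:ℂ) ^ (4 * v.1.2.1) := by
      rw [← Complex.ofReal_pow, Real.sq_sqrt (sub_nonneg.2 (zpow_le_zpow_right₀ hq.le (by omega)))]
      push_cast; ring
    rw [X3_single, XMinus_single, XPlus_single _ _ _ h, map_smul, map_smul, map_smul,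
      X3_single, XPlus_single _ _ _ hd, down_up, XMinus_single, up_down]
    simp only [smul_smul]
    rw [← sub_smul, ← sub_smul]
    congr 1
    rw [huM, hun, hduM, hdun, show v.1.2.1 + 1 - 1 = v.1.2.1 by ring]
    push_cast
    field_simp
    ring_nf
    ring_nf at hA hB
    have hS4 : ((Real.sqrt (1 + q ^ 2) : ℝ) : ℂ) ^ 4 = (1 + (q:ℂ)^2)^2 := by
      rw [show ((Real.sqrt (1 + q ^ 2) : ℝ) : ℂ) ^ 4 = (((Real.sqrt (1 + q ^ 2) : ℝ) : ℂ)^2)^2 by ring, hS]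
    rw [hA, hB, hS, hT, hR, hQ]
    ring
  · have hMeq : v.1.2.1 = v.1.1 := by omega
    rw [XPlus_single_top _ _ _ h, map_zero, XMinus_single, map_smul,
      XPlus_single _ _ _ hd, down_up, X3_single, map_smul, X3_single]
    simp only [smul_smul, smul_zero]
    rw [sub_zero, ← sub_smul]
    congr 1
    rw [hduM, hdun, hMeq]
    push_cast
    field_simp
    ring_nf
    have hB' : ((Real.sqrt (q ^ (4 * v.1.1) - q ^ (4 * (v.1.1 - 1))) : ℝ) : ℂ) ^ 2
        = (q:ℂ) ^ (4 * v.1.1) - (q:ℂ) ^ (4 * (v.1.1 - 1)) := by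
      rw [← Complex.ofReal_pow, Real.sq_sqrt (sub_nonneg.2 (zpow_le_zpow_right₀ hq.le (by omega)))]
      push_cast; ring
    ring_nf at hB'
    have hQ' : (q:ℂ) ^ (v.1.1 * 4) = (q:ℂ) ^ (-4 + v.1.1 * 4) * (q:ℂ) ^ (4:ℕ) := by
      rw [← zp _ hqc]; congr 1; push_cast; ring
    have hT' : ((q:ℂ) ^ (v.1.1 * 2)) ^ 2 = (q:ℂ) ^ (-4 + v.1.1 * 4) * (q:ℂ) ^ (4:ℕ) := by
      rw [← zp _ hqc, ← zpow_natCast ((q:ℂ) ^ (v.1.1 * 2)) 2, ← zpow_mul]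
      congr 1; push_cast; ring
    rw [hB', hS, hT', hR, hQ']
    ring

/-- these operators satisfy the ℝ³_q relations
X³X⁺ = q²X⁺X³, X³X⁻ = q⁻²X⁻X³, X⁻X⁺ − X⁺X⁻ = λX³X³ (λ = q − q⁻¹), and
R² = X³X³ − qX⁺X⁻ − q⁻¹X⁻X⁺ acts on |M,ν,m⟩ as the scalar q^{4M+2}z₀². -/
theorem stmt18 (q z0 : ℝ) (hq : 1 < q) (hz : z0 ≠ 0) :
    X3Op q z0 * XPlusOp q z0 = ((q : ℂ) ^ 2) • (XPlusOp q z0 * X3Op q z0) ∧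
    X3Op q z0 * XMinusOp q z0 = ((q : ℂ) ^ 2)⁻¹ • (XMinusOp q z0 * X3Op q z0) ∧
    XMinusOp q z0 * XPlusOp q z0 - XPlusOp q z0 * XMinusOp q z0 =
      ((q : ℂ) - (q : ℂ)⁻¹) • (X3Op q z0 * X3Op q z0) ∧
    ∀ v : XIdx,
      (X3Op q z0 * X3Op q z0 - (q : ℂ) • (XPlusOp q z0 * XMinusOp q z0) -
          (q : ℂ)⁻¹ • (XMinusOp q z0 * XPlusOp q z0)) (Finsupp.single v 1) =
        ((q ^ (4 * v.1.1 + 2) * z0 ^ 2 : ℝ) : ℂ) • Finsupp.single v 1 := by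
  exact ⟨rel1 q z0 hq, rel2 q z0 hq, rel3 q z0 hq, rel4 q z0 hq⟩

end
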